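/- Let f : X → Y be a bi-Lipschitz bijection between normed spaces with ‖f⁻¹ u - f⁻¹ v‖ ≤ L‖u - v‖ for all u, v ∈ Y. If f is ε-Fréchet differentiable at a point x₀ with associated bounded linear operator T, and ε < 1/L, then T is a linear isomorphism from X onto Y; in particular, ‖T u‖ ≥ (1/L - ε)‖u‖ for all u ∈ X, and T has dense range, hence (being bounded below) is surjective when X is a Banach space. -/

import Mathlib

open NNReal

/-- If a bi-Lipschitz bijection between Banach spaces is `ε`-Fréchet differentiable at a point
with operator `T` and `ε < 1/L`, then `T` is an isomorphism onto `Y`. -/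
theorem stmt_6 {X Y : Type*} [NormedAddCommGroup X] [NormedSpace ℝ X] [CompleteSpace X]
    [NormedAddCommGroup Y] [NormedSpace ℝ Y] [CompleteSpace Y]
    (f : X → Y) (hbij : Function.Bijective f)
    (Kf : ℝ≥0) (hf : LipschitzWith Kf f)
    (L : ℝ) (hL : 0 < L)
    (hinv : ∀ u v : Y, ‖Function.invFun f u - Function.invFun f v‖ ≤ L * ‖u - v‖)
    (x₀ : X) (T : X →L[ℝ] Y) (ε : ℝ) (hε : ε < 1 / L)
    (δ : ℝ) (hδ : 0 < δ)
    (hdiff : ∀ u : X, ‖u‖ ≤ δ → ‖f (x₀ + u) - f x₀ - T u‖ ≤ ε * ‖u‖) :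
    (∀ u : X, (1 / L - ε) * ‖u‖ ≤ ‖T u‖) ∧ DenseRange T ∧ Function.Bijective T := by
  have hinvf : ∀ x : X, Function.invFun f (f x) = x := fun x =>
    Function.leftInverse_invFun hbij.injective x
  have hfinv : ∀ y : Y, f (Function.invFun f y) = y := fun y =>
    Function.rightInverse_invFun hbij.surjective y
  -- lower bound for small u
  have key : ∀ u : X, ‖u‖ ≤ δ → (1 / L - ε) * ‖u‖ ≤ ‖T u‖ := by
    intro u hu
    have h1 : ‖u‖ ≤ L * ‖f (x₀ + u) - f x₀‖ := by
      have := hinv (f (x₀ + u)) (f x₀)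
      rwa [hinvf, hinvf, add_sub_cancel_left] at this
    have h2 := hdiff u hu
    have h3 : ‖f (x₀ + u) - f x₀‖ ≤ ‖T u‖ + ε * ‖u‖ := by
      calc ‖f (x₀ + u) - f x₀‖ = ‖T u + (f (x₀ + u) - f x₀ - T u)‖ := by congr 1; abel
        _ ≤ ‖T u‖ + ‖f (x₀ + u) - f x₀ - T u‖ := norm_add_le _ _
        _ ≤ ‖T u‖ + ε * ‖u‖ := by linarith
    have h4 : ‖u‖ / L ≤ ‖T u‖ + ε * ‖u‖ := le_trans (by
      rw [div_le_iff₀ hL]; linarith [h1, mul_comm L ‖f (x₀ + u) - f x₀‖]) h3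
    have : (1 / L) * ‖u‖ = ‖u‖ / L := by ring
    nlinarith [h4]
  -- lower bound everywhere, by homogeneity
  have lower : ∀ u : X, (1 / L - ε) * ‖u‖ ≤ ‖T u‖ := by
    intro u
    rcases eq_or_ne u 0 with rfl | hu
    · simp
    · have hun : 0 < ‖u‖ := norm_pos_iff.mpr hu
      set t : ℝ := δ / ‖u‖ with ht
      have htpos : 0 < t := div_pos hδ hun
      have hnv : ‖t • u‖ = δ := by
        rw [norm_smul, Real.norm_eq_abs, abs_of_pos htpos, ht]
        field_simp
      have := key (t • u) (le_of_eq hnv)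
      rw [hnv, map_smul, norm_smul, Real.norm_eq_abs, abs_of_pos htpos] at this
      have h5 : (1 / L - ε) * ‖u‖ * t ≤ ‖T u‖ * t := by
        calc (1 / L - ε) * ‖u‖ * t = (1 / L - ε) * δ := by rw [ht]; field_simp
          _ ≤ t * ‖T u‖ := this
          _ = ‖T u‖ * t := mul_comm _ _
      exact le_of_mul_le_mul_right h5 htpos
  -- approximation lemma
  set c : ℝ := L * max ε 0 with hc
  have hc0 : 0 ≤ c := mul_nonneg hL.le (le_max_right _ _)
  have hc1 : c < 1 := by
    rcases le_or_gt ε 0 with h | h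
    · simp [hc, max_eq_right h]
    · rw [hc, max_eq_left h.le]
      calc L * ε < L * (1 / L) := by exact (mul_lt_mul_iff_right₀ hL).mpr hε
        _ = 1 := by field_simp
  have approx : ∀ y : Y, ∃ x : X, ‖x‖ ≤ L * ‖y‖ ∧ ‖T x - y‖ ≤ c * ‖y‖ := by
    intro y
    rcases eq_or_ne y 0 with rfl | hy
    · exact ⟨0, by simp⟩
    · have hyn : 0 < ‖y‖ := norm_pos_iff.mpr hy
      set t : ℝ := δ / (L * ‖y‖) with ht
      have htpos : 0 < t := div_pos hδ (mul_pos hL hyn)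
      set y' : Y := t • y with hy'
      have hy'n : ‖y'‖ = δ / L := by
        rw [hy', norm_smul, Real.norm_eq_abs, abs_of_pos htpos, ht]
        field_simp
      set x' : X := Function.invFun f (f x₀ + y') - x₀ with hx'
      have hfx' : f (x₀ + x') = f x₀ + y' := by
        rw [hx', add_sub_cancel, hfinv]
      have hx'n : ‖x'‖ ≤ L * ‖y'‖ := by
        have := hinv (f x₀ + y') (f x₀)
        rwa [hinvf, add_sub_cancel_left, ← hx'] at this
      have hx'δ : ‖x'‖ ≤ δ := by
        rw [hy'n] at hx'n
        calc ‖x'‖ ≤ L * (δ / L) := hx'n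
          _ = δ := by field_simp
      have hd := hdiff x' hx'δ
      rw [hfx', add_sub_cancel_left] at hd
      have hTy' : ‖T x' - y'‖ ≤ c * ‖y'‖ := by
        rw [← norm_neg, neg_sub]
        calc ‖y' - T x'‖ ≤ ε * ‖x'‖ := hd
          _ ≤ max ε 0 * ‖x'‖ := by
              apply mul_le_mul_of_nonneg_right (le_max_left _ _) (norm_nonneg _)
          _ ≤ max ε 0 * (L * ‖y'‖) := by
              apply mul_le_mul_of_nonneg_left hx'n (le_max_right _ _)
          _ = c * ‖y'‖ := by rw [hc]; ring
      refine ⟨t⁻¹ • x', ?_, ?_⟩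
      · rw [norm_smul, Real.norm_eq_abs, abs_of_pos (inv_pos.mpr htpos)]
        calc t⁻¹ * ‖x'‖ ≤ t⁻¹ * (L * ‖y'‖) := by
              apply mul_le_mul_of_nonneg_left hx'n (inv_pos.mpr htpos).le
          _ = L * ‖y‖ := by
              rw [hy', norm_smul, Real.norm_eq_abs, abs_of_pos htpos]
              field_simp
      · have : T (t⁻¹ • x') - y = t⁻¹ • (T x' - y') := by
          rw [map_smul, smul_sub, hy', smul_smul, inv_mul_cancel₀ htpos.ne', one_smul]
        rw [this, norm_smul, Real.norm_eq_abs, abs_of_pos (inv_pos.mpr htpos)]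
        calc t⁻¹ * ‖T x' - y'‖ ≤ t⁻¹ * (c * ‖y'‖) := by
              apply mul_le_mul_of_nonneg_left hTy' (inv_pos.mpr htpos).le
          _ = c * ‖y‖ := by
              rw [hy', norm_smul, Real.norm_eq_abs, abs_of_pos htpos]
              field_simp
  -- iterated approximation
  have iter : ∀ y : Y, ∀ n : ℕ, ∃ x : X, ‖T x - y‖ ≤ c ^ n * ‖y‖ := by
    intro y n
    induction n with
    | zero => exact ⟨0, by simp⟩
    | succ n ih =>
        obtain ⟨x, hx⟩ := ih
        obtain ⟨x', hx'1, hx'2⟩ := approx (y - T x)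
        refine ⟨x + x', ?_⟩
        have : T (x + x') - y = T x' - (y - T x) := by
          rw [map_add]; abel
        rw [this]
        calc ‖T x' - (y - T x)‖ ≤ c * ‖y - T x‖ := hx'2
          _ = c * ‖T x - y‖ := by rw [← norm_neg, neg_sub]
          _ ≤ c * (c ^ n * ‖y‖) := mul_le_mul_of_nonneg_left hx hc0
          _ = c ^ (n + 1) * ‖y‖ := by ring
  have hdense : DenseRange T := by
    rw [Metric.denseRange_iff]
    intro y r hr
    have htend : Filter.Tendsto (fun n : ℕ => c ^ n * ‖y‖) Filter.atTop (nhds 0) := by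
      simpa using (tendsto_pow_atTop_nhds_zero_of_lt_one hc0 hc1).mul_const ‖y‖
    obtain ⟨n, hn⟩ := (htend.eventually (gt_mem_nhds hr)).exists
    obtain ⟨x, hx⟩ := iter y n
    refine ⟨x, ?_⟩
    rw [dist_eq_norm, ← norm_neg, neg_sub]
    exact lt_of_le_of_lt hx hn
  -- antilipschitz
  have hpos : 0 < 1 / L - ε := by linarith
  have hanti : AntilipschitzWith ⟨(1 / L - ε)⁻¹, inv_nonneg.mpr hpos.le⟩ T := by
    apply ContinuousLinearMap.antilipschitz_of_bound
    intro x
    change ‖x‖ ≤ (1 / L - ε)⁻¹ * ‖T x‖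
    rw [inv_mul_eq_div, le_div_iff₀ hpos, mul_comm]
    exact lower x
  have hclosed : IsClosed (Set.range T) := hanti.isClosed_range T.uniformContinuous
  have hsurj : Function.Surjective T := by
    rw [← Set.range_eq_univ, ← hclosed.closure_eq]
    exact hdense.closure_range
  exact ⟨lower, hdense, ⟨hanti.injective, hsurj⟩⟩
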